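/- In the setting of the previous statement, assume additionally that N is the restriction to S of a nonnegative continuous function vanishing exactly on E, and that max_{θ∈E} R(θ)/√(Λ(θ)) is attained at a unique θ* ∈ E with R(θ*) > 0. Then the minimizers (r_n,θ_n) of h_n(r,θ) = rN(θ) + r²Λ(θ) - r t_n R_n(θ) satisfy θ_n → θ* and r_n/t_n → R(θ*)/(2Λ(θ*)). -/

import Mathlib

open Filter

private lemma quad_key {A x u v : ℝ} (hA : 0 < A)
    (hle : x * v + x ^ 2 * A - x * u ≤
      ((u - v) / (2 * A)) * v + ((u - v) / (2 * A)) ^ 2 * A - ((u - v) / (2 * A)) * u) :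
    2 * A * x = u - v := by
  have hA' : A ≠ 0 := hA.ne'
  have h4 : (0:ℝ) < 4 * A := by linarith
  have hrhs : ((u - v) / (2 * A)) * v + ((u - v) / (2 * A)) ^ 2 * A - ((u - v) / (2 * A)) * u
      = -((u - v) ^ 2) / (4 * A) := by
    field_simp
    ring
  rw [hrhs] at hle
  have h2 := mul_le_mul_of_nonneg_right hle h4.le
  rw [div_mul_cancel₀ _ h4.ne'] at h2
  have hsq : (2 * A * x - (u - v)) ^ 2 ≤ 0 := by nlinarith [h2]
  have h0 : 2 * A * x - (u - v) = 0 :=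
    (pow_eq_zero_iff two_ne_zero).mp (le_antisymm hsq (sq_nonneg _))
  linarith

/-- Convergence of the rescaled unconfined minimizer of the model objective
`h_n(r,θ) = rN(θ) + r²Λ(θ) - r t_n R_n(θ)` to the escape vector: if `R/√Λ`
attains its maximum over `E = {N = 0}` at a unique `θ*` with `R(θ*) > 0`, then
`θ_n → θ*` and `r_n/t_n → R(θ*)/(2Λ(θ*))`. -/
theorem stmt_15 {S : Type*} [MetricSpace S] [CompactSpace S]
    (Λ : S → ℝ) (hΛc : Continuous Λ) (hΛ : ∃ c : ℝ, 0 < c ∧ ∀ θ, c ≤ Λ θ)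
    (R : ℕ → S → ℝ) (Rlim : S → ℝ)
    (hRc : ∀ n, Continuous (R n)) (hRlimc : Continuous Rlim)
    (hunif : TendstoUniformly R Rlim atTop)
    (t : ℕ → ℝ) (ht : ∀ n, 0 < t n) (htlim : Tendsto t atTop (nhds 0))
    (N : S → ℝ) (hNc : Continuous N) (hN0 : ∀ θ, 0 ≤ N θ)
    (E : Set S) (hE : IsClosed E) (hNE : ∀ θ, N θ = 0 ↔ θ ∈ E)
    (h : ℕ → ℝ × S → ℝ)
    (hh : ∀ n (p : ℝ × S),
      h n p = p.1 * N p.2 + p.1 ^ 2 * Λ p.2 - p.1 * t n * R n p.2)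
    (r : ℕ → ℝ) (θ : ℕ → S) (hr : ∀ n, 0 < r n)
    (hmin : ∀ n, ∀ q : ℝ × S, 0 ≤ q.1 → h n (r n, θ n) ≤ h n q)
    (θstar : S) (hθE : θstar ∈ E) (hRpos : 0 < Rlim θstar)
    (hmax : ∀ φ ∈ E, φ ≠ θstar →
      Rlim φ / Real.sqrt (Λ φ) < Rlim θstar / Real.sqrt (Λ θstar)) :
    Tendsto θ atTop (nhds θstar) ∧
    Tendsto (fun n => r n / t n) atTop (nhds (Rlim θstar / (2 * Λ θstar))) := by
  obtain ⟨c, hc, hcle⟩ := hΛ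
  have hΛpos : ∀ φ, 0 < Λ φ := fun φ => lt_of_lt_of_le hc (hcle φ)
  have hts : 0 < Λ θstar := hΛpos θstar
  have hNstar : N θstar = 0 := (hNE θstar).mpr hθE
  have hfeval : ∀ n (x : ℝ) (φ : S), h n (x, φ) = x * N φ + x ^ 2 * Λ φ - x * t n * R n φ :=
    fun n x φ => hh n (x, φ)
  -- the key algebraic facts at each n with `R n θstar ≥ 0`
  have key : ∀ n, 0 ≤ R n θstar →
      0 < t n * R n (θ n) - N (θ n) ∧
      2 * Λ (θ n) * r n = t n * R n (θ n) - N (θ n) ∧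
      Λ (θ n) * (t n * R n θstar) ^ 2 ≤ Λ θstar * (t n * R n (θ n) - N (θ n)) ^ 2 := by
    intro n hn
    have hΛn : 0 < Λ (θ n) := hΛpos (θ n)
    -- comparison with r = 0
    have h0 := hmin n (0, θ n) le_rfl
    rw [hfeval, hfeval] at h0
    norm_num at h0
    have hB : 0 < t n * R n (θ n) - N (θ n) := by
      nlinarith [h0, hr n, mul_pos (mul_pos (hr n) (hr n)) hΛn]
    -- comparison with the vertex of the parabola at θ n
    have h1 := hmin n ((t n * R n (θ n) - N (θ n)) / (2 * Λ (θ n)), θ n)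
      (le_of_lt (div_pos hB (by linarith)))
    rw [hfeval, hfeval] at h1
    have heq : 2 * Λ (θ n) * r n = t n * R n (θ n) - N (θ n) := by
      refine quad_key hΛn ?_
      nlinarith [h1]
    refine ⟨hB, heq, ?_⟩
    -- comparison with the candidate at θstar
    have h2 := hmin n (t n * R n θstar / (2 * Λ θstar), θstar)
      (div_nonneg (mul_nonneg (ht n).le hn) (by linarith))
    rw [hfeval, hfeval] at h2
    have hval2 : (t n * R n θstar / (2 * Λ θstar)) * N θstar
        + (t n * R n θstar / (2 * Λ θstar)) ^ 2 * Λ θstar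
        - (t n * R n θstar / (2 * Λ θstar)) * t n * R n θstar
        = -((t n * R n θstar) ^ 2) / (4 * Λ θstar) := by
      rw [hNstar]
      field_simp
      ring
    rw [hval2] at h2
    have hval1 : r n * N (θ n) + r n ^ 2 * Λ (θ n) - r n * t n * R n (θ n)
        = -((t n * R n (θ n) - N (θ n)) ^ 2) / (4 * Λ (θ n)) := by
      field_simp
      linear_combination (2 * Λ (θ n) * r n - (t n * R n (θ n) - N (θ n))) * heq
    rw [hval1] at h2
    rw [neg_div, neg_div, neg_le_neg_iff] at h2
    rw [div_le_div_iff₀ (by linarith) (by linarith)] at h2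
    nlinarith [h2]
  -- derived comparison of the `R²/Λ` values
  have hsqcmp : ∀ n, 0 ≤ R n θstar →
      (R n θstar) ^ 2 * Λ (θ n) ≤ (R n (θ n)) ^ 2 * Λ θstar := by
    intro n hn
    obtain ⟨hB, -, h3⟩ := key n hn
    have hBle : t n * R n (θ n) - N (θ n) ≤ t n * R n (θ n) := by linarith [hN0 (θ n)]
    have hB2 : (t n * R n (θ n) - N (θ n)) ^ 2 ≤ (t n * R n (θ n)) ^ 2 := by nlinarith [hB, hBle]
    have h5 : Λ (θ n) * (t n * R n θstar) ^ 2 ≤ Λ θstar * (t n * R n (θ n)) ^ 2 :=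
      le_trans h3 (mul_le_mul_of_nonneg_left hB2 hts.le)
    have ht2 : 0 < (t n) ^ 2 := pow_pos (ht n) 2
    nlinarith [h5, ht2]
  -- eventually `R n θstar ≥ 0`
  have hRstar : Tendsto (fun n => R n θstar) atTop (nhds (Rlim θstar)) :=
    hunif.tendsto_at θstar
  have hev : ∀ᶠ n in atTop, 0 ≤ R n θstar :=
    (hRstar.eventually (eventually_gt_nhds hRpos)).mono fun n hn => hn.le
  -- Part I : θ n → θstar
  have hθconv : Tendsto θ atTop (nhds θstar) := by
    apply tendsto_of_subseq_tendsto
    intro ns hns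
    obtain ⟨φ, -, ms, hms, hφ⟩ :=
      isCompact_univ.tendsto_subseq (x := fun k => θ (ns k)) (fun k => Set.mem_univ _)
    refine ⟨ms, ?_⟩
    suffices hφs : φ = θstar by
      rw [hφs] at hφ; exact hφ
    set m : ℕ → ℕ := fun k => ns (ms k) with hm_def
    have hm : Tendsto m atTop atTop := hns.comp hms.tendsto_atTop
    have hθm : Tendsto (fun k => θ (m k)) atTop (nhds φ) := hφ
    have hunif_m : TendstoUniformly (fun k => R (m k)) Rlim atTop :=
      fun u hu => hm.eventually (hunif u hu)
    have hRθm : Tendsto (fun k => R (m k) (θ (m k))) atTop (nhds (Rlim φ)) :=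
      hunif_m.tendsto_comp hRlimc.continuousAt hθm
    have htm : Tendsto (fun k => t (m k)) atTop (nhds 0) := htlim.comp hm
    have hNm : Tendsto (fun k => N (θ (m k))) atTop (nhds (N φ)) :=
      (hNc.tendsto φ).comp hθm
    have hevm : ∀ᶠ k in atTop, 0 ≤ R (m k) θstar := hm.eventually hev
    -- N φ = 0
    have hub : Tendsto (fun k => t (m k) * R (m k) (θ (m k))) atTop (nhds 0) := by
      simpa using htm.mul hRθm
    have hN0' : Tendsto (fun k => N (θ (m k))) atTop (nhds 0) := by
      refine tendsto_of_tendsto_of_tendsto_of_le_of_le' tendsto_const_nhds hub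
        (Eventually.of_forall fun k => hN0 _) ?_
      exact hevm.mono fun k hk => by have := (key (m k) hk).1; linarith
    have hNφ : N φ = 0 := tendsto_nhds_unique hNm hN0'
    have hφE : φ ∈ E := (hNE φ).mp hNφ
    -- comparison of squares in the limit
    have hΛm : Tendsto (fun k => Λ (θ (m k))) atTop (nhds (Λ φ)) :=
      (hΛc.tendsto φ).comp hθm
    have hRstarm : Tendsto (fun k => R (m k) θstar) atTop (nhds (Rlim θstar)) :=
      hRstar.comp hm
    have hsq : (Rlim θstar) ^ 2 * Λ φ ≤ (Rlim φ) ^ 2 * Λ θstar := by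
      refine le_of_tendsto_of_tendsto ((hRstarm.pow 2).mul hΛm)
        ((hRθm.pow 2).mul tendsto_const_nhds) ?_
      exact hevm.mono fun k hk => hsqcmp (m k) hk
    have hφnn : 0 ≤ Rlim φ := by
      refine ge_of_tendsto hRθm ?_
      refine hevm.mono fun k hk => ?_
      have hB := (key (m k) hk).1
      have hN := hN0 (θ (m k))
      nlinarith [ht (m k)]
    -- conclude
    by_contra hne
    have hlt := hmax φ hφE hne
    have hsφ : 0 < Real.sqrt (Λ φ) := Real.sqrt_pos.mpr (hΛpos φ)
    have hss : 0 < Real.sqrt (Λ θstar) := Real.sqrt_pos.mpr hts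
    have hsq' : (Rlim θstar / Real.sqrt (Λ θstar)) ^ 2 ≤ (Rlim φ / Real.sqrt (Λ φ)) ^ 2 := by
      rw [div_pow, div_pow, Real.sq_sqrt (hΛpos φ).le, Real.sq_sqrt hts.le]
      rw [div_le_div_iff₀ hts (hΛpos φ)]
      linarith [hsq]
    have ha : 0 ≤ Rlim θstar / Real.sqrt (Λ θstar) := div_nonneg hRpos.le hss.le
    have hb : 0 ≤ Rlim φ / Real.sqrt (Λ φ) := div_nonneg hφnn hsφ.le
    nlinarith [hsq', ha, hb, hlt]
  refine ⟨hθconv, ?_⟩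
  -- Part II : r n / t n → Rlim θstar / (2 Λ θstar)
  have hRθ : Tendsto (fun n => R n (θ n)) atTop (nhds (Rlim θstar)) :=
    hunif.tendsto_comp hRlimc.continuousAt hθconv
  have hΛθ : Tendsto (fun n => Λ (θ n)) atTop (nhds (Λ θstar)) :=
    (hΛc.tendsto θstar).comp hθconv
  set s : ℕ → ℝ := fun n => R n (θ n) - N (θ n) / t n with hs_def
  -- lower bound for s
  have hslb : ∀ᶠ n in atTop, Real.sqrt ((R n θstar) ^ 2 * Λ (θ n) / Λ θstar) ≤ s n := by
    refine hev.mono fun n hn => ?_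
    obtain ⟨hB, -, h3⟩ := key n hn
    have hΛn : 0 < Λ (θ n) := hΛpos (θ n)
    have htn : 0 < t n := ht n
    have hsn : s n = (t n * R n (θ n) - N (θ n)) / t n := by
      simp only [hs_def, sub_div, mul_div_cancel_left₀ _ htn.ne']
    have hsnn : 0 ≤ s n := by
      rw [hsn]; exact (div_pos hB htn).le
    have hsq2 : (R n θstar) ^ 2 * Λ (θ n) / Λ θstar ≤ (s n) ^ 2 := by
      rw [hsn, div_pow, div_le_div_iff₀ hts (pow_pos htn 2)]
      nlinarith [h3]
    calc Real.sqrt ((R n θstar) ^ 2 * Λ (θ n) / Λ θstar)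
        ≤ Real.sqrt ((s n) ^ 2) := Real.sqrt_le_sqrt hsq2
      _ = s n := Real.sqrt_sq hsnn
  -- upper bound for s
  have hsub : ∀ᶠ n in atTop, s n ≤ R n (θ n) :=
    Eventually.of_forall fun n => by
      simp only [hs_def]
      have : 0 ≤ N (θ n) / t n := div_nonneg (hN0 _) (ht n).le
      linarith
  -- the lower bound tends to Rlim θstar
  have hL : Tendsto (fun n => Real.sqrt ((R n θstar) ^ 2 * Λ (θ n) / Λ θstar)) atTop
      (nhds (Rlim θstar)) := by
    have h1 : Tendsto (fun n => (R n θstar) ^ 2 * Λ (θ n) / Λ θstar) atTop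
        (nhds ((Rlim θstar) ^ 2 * Λ θstar / Λ θstar)) := ((hRstar.pow 2).mul hΛθ).div_const _
    have h2 := (Real.continuous_sqrt.tendsto _).comp h1
    have h3 : (Rlim θstar) ^ 2 * Λ θstar / Λ θstar = (Rlim θstar) ^ 2 := by
      rw [mul_div_assoc, div_self hts.ne', mul_one]
    rw [h3] at h2
    simpa [Function.comp_def, Real.sqrt_sq hRpos.le] using h2
  -- squeeze
  have hs : Tendsto s atTop (nhds (Rlim θstar)) :=
    tendsto_of_tendsto_of_tendsto_of_le_of_le' hL hRθ hslb hsub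
  have hq : Tendsto (fun n => s n / (2 * Λ (θ n))) atTop
      (nhds (Rlim θstar / (2 * Λ θstar))) :=
    hs.div ((tendsto_const_nhds (x := (2:ℝ))).mul hΛθ) (by positivity)
  refine hq.congr' ?_
  refine hev.mono fun n hn => ?_
  show s n / (2 * Λ (θ n)) = r n / t n
  obtain ⟨hB, heq, -⟩ := key n hn
  have hΛn : 0 < Λ (θ n) := hΛpos (θ n)
  have htn : 0 < t n := ht n
  have hsn : s n = (t n * R n (θ n) - N (θ n)) / t n := by
    simp only [hs_def, sub_div, mul_div_cancel_left₀ _ htn.ne']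
  rw [hsn, ← heq]
  rw [div_div, eq_comm, div_eq_div_iff (by positivity) (by positivity)]
  ring
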